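/- Define f̂(x, s) = (sign(2x − 1)(1 − 2s) + 1)/2 and f̃(x, s) = (sign(2x − 1) + 1)/2 for x ∈ [0,1] and s ∈ {0,1}, where sign(t) = 1 if t > 0 and −1 if t ≤ 0. If X is uniformly distributed on [0,1] under both groups s = 0 and s = 1, then: (a) the distribution of f̂(X, 0) equals the distribution of f̂(X, 1), and likewise for f̃; but (b) on the subset A = [1/2, 1], E[f̂(X,0) | X ∈ A] = 1 while E[f̂(X,1) | X ∈ A] = 0, whereas E[f̃(X,0) | X ∈ A] = E[f̃(X,1) | X ∈ A] = 1. -/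

import Mathlib

open MeasureTheory ProbabilityTheory
open scoped Classical

/-- sign(t) = 1 if t > 0 and −1 if t ≤ 0. -/
noncomputable def sgn (t : ℝ) : ℝ := if 0 < t then 1 else -1

/-- f̂(x, s) = (sign(2x − 1)(1 − 2s) + 1)/2 : the group-flipping classifier. -/
noncomputable def fhat (x s : ℝ) : ℝ := (sgn (2 * x - 1) * (1 - 2 * s) + 1) / 2

/-- f̃(x, s) = (sign(2x − 1) + 1)/2 : the group-independent classifier. -/
noncomputable def ftilde (x s : ℝ) : ℝ := (sgn (2 * x - 1) + 1) / 2

lemma fhat0_eq (x : ℝ) : fhat x 0 = if 1/2 < x then 1 else 0 := by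
  simp only [fhat, sgn]
  by_cases h : (1/2 : ℝ) < x
  · rw [if_pos h, if_pos (by linarith)]; ring
  · rw [if_neg h, if_neg (by push_neg at h ⊢; linarith)]; ring

lemma fhat1_eq (x : ℝ) : fhat x 1 = if 1/2 < x then 0 else 1 := by
  simp only [fhat, sgn]
  by_cases h : (1/2 : ℝ) < x
  · rw [if_pos h, if_pos (by linarith)]; ring
  · rw [if_neg h, if_neg (by push_neg at h ⊢; linarith)]; ring

lemma ftilde_eq (x s : ℝ) : ftilde x s = if 1/2 < x then 1 else 0 := by
  simp only [ftilde, sgn]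
  by_cases h : (1/2 : ℝ) < x
  · rw [if_pos h, if_pos (by linarith)]; ring
  · rw [if_neg h, if_neg (by push_neg at h ⊢; linarith)]; ring

lemma meas_f0 : Measurable (fun x : ℝ => fhat x 0) := by
  simp only [fhat0_eq]
  exact Measurable.ite measurableSet_Ioi measurable_const measurable_const

lemma meas_f1 : Measurable (fun x : ℝ => fhat x 1) := by
  simp only [fhat1_eq]
  exact Measurable.ite measurableSet_Ioi measurable_const measurable_const

lemma pre0 (s : Set ℝ) :
    (fun x : ℝ => fhat x 0) ⁻¹' s =
      (if (1:ℝ) ∈ s then Set.Ioi (1/2 : ℝ) else ∅) ∪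
      (if (0:ℝ) ∈ s then Set.Iic (1/2 : ℝ) else ∅) := by
  ext x
  simp only [Set.mem_preimage, fhat0_eq, Set.mem_union]
  rcases lt_or_ge (1/2 : ℝ) x with h | h
  · rw [if_pos h]
    by_cases h1 : (1:ℝ) ∈ s <;> by_cases h0 : (0:ℝ) ∈ s <;>
      simp_all [Set.mem_Ioi, Set.mem_Iic, not_lt]
  · rw [if_neg (not_lt.mpr h)]
    by_cases h1 : (1:ℝ) ∈ s <;> by_cases h0 : (0:ℝ) ∈ s <;>
      simp_all [Set.mem_Ioi, Set.mem_Iic, not_lt]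

lemma pre1 (s : Set ℝ) :
    (fun x : ℝ => fhat x 1) ⁻¹' s =
      (if (0:ℝ) ∈ s then Set.Ioi (1/2 : ℝ) else ∅) ∪
      (if (1:ℝ) ∈ s then Set.Iic (1/2 : ℝ) else ∅) := by
  ext x
  simp only [Set.mem_preimage, fhat1_eq, Set.mem_union]
  rcases lt_or_ge (1/2 : ℝ) x with h | h
  · rw [if_pos h]
    by_cases h1 : (1:ℝ) ∈ s <;> by_cases h0 : (0:ℝ) ∈ s <;>
      simp_all [Set.mem_Ioi, Set.mem_Iic, not_lt]
  · rw [if_neg (not_lt.mpr h)]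
    by_cases h1 : (1:ℝ) ∈ s <;> by_cases h0 : (0:ℝ) ∈ s <;>
      simp_all [Set.mem_Ioi, Set.mem_Iic, not_lt]

lemma mu_Ioi : (volume.restrict (Set.Icc (0:ℝ) 1)) (Set.Ioi (1/2 : ℝ)) = ENNReal.ofReal (1/2) := by
  rw [Measure.restrict_apply measurableSet_Ioi]
  have : Set.Ioi (1/2 : ℝ) ∩ Set.Icc 0 1 = Set.Ioc (1/2 : ℝ) 1 := by
    ext x
    simp only [Set.mem_inter_iff, Set.mem_Ioi, Set.mem_Icc, Set.mem_Ioc]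
    constructor
    · rintro ⟨h, _, h2⟩; exact ⟨h, h2⟩
    · rintro ⟨h1, h2⟩; exact ⟨h1, by linarith, h2⟩
  rw [this, Real.volume_Ioc]; norm_num

lemma mu_Iic : (volume.restrict (Set.Icc (0:ℝ) 1)) (Set.Iic (1/2 : ℝ)) = ENNReal.ofReal (1/2) := by
  rw [Measure.restrict_apply measurableSet_Iic]
  have : Set.Iic (1/2 : ℝ) ∩ Set.Icc 0 1 = Set.Icc (0 : ℝ) (1/2) := by
    ext x
    simp only [Set.mem_inter_iff, Set.mem_Iic, Set.mem_Icc]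
    constructor
    · rintro ⟨h, h1, _⟩; exact ⟨h1, h⟩
    · rintro ⟨h1, h2⟩; exact ⟨h2, h1, by linarith⟩
  rw [this, Real.volume_Icc]; norm_num


lemma cond_eq : (volume.restrict (Set.Icc (0:ℝ) 1))[|Set.Icc (1/2:ℝ) 1]
    = (ENNReal.ofReal (1/2))⁻¹ • volume.restrict (Set.Icc (1/2:ℝ) 1) := by
  have hset : Set.Icc (1/2:ℝ) 1 ∩ Set.Icc 0 1 = Set.Icc (1/2:ℝ) 1 := by
    rw [Set.inter_eq_left]; intro x hx; exact ⟨by linarith [hx.1], hx.2⟩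
  rw [ProbabilityTheory.cond, Measure.restrict_restrict measurableSet_Icc, hset]
  congr 1
  rw [Measure.restrict_apply measurableSet_Icc, hset, Real.volume_Icc]
  norm_num

lemma ae_on (f : ℝ → ℝ) (c : ℝ) (h : ∀ x, 1/2 < x → x ≤ 1 → f x = c) :
    ∀ᵐ x ∂(volume.restrict (Set.Icc (1/2:ℝ) 1)), f x = c := by
  rw [ae_restrict_iff' measurableSet_Icc]
  have hne : ∀ᵐ x : ℝ ∂volume, x ≠ 1/2 := by
    refine compl_mem_ae_iff.mpr ?_
    have h2 : {x : ℝ | x = 1/2} = {(1/2 : ℝ)} := by ext x; simp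
    show volume {x : ℝ | x = 1/2} = 0
    rw [h2]; exact Real.volume_singleton
  filter_upwards [hne] with x hx hxA
  exact h x (lt_of_le_of_ne hxA.1 (Ne.symm hx)) hxA.2

lemma int_cond (f : ℝ → ℝ) (c : ℝ)
    (h : ∀ᵐ x ∂(volume.restrict (Set.Icc (1/2:ℝ) 1)), f x = c) :
    ∫ x, f x ∂((volume.restrict (Set.Icc (0:ℝ) 1))[|Set.Icc (1/2:ℝ) 1]) = c := by
  rw [cond_eq, integral_smul_measure, integral_congr_ae h, integral_const]
  simp [Measure.restrict_apply_univ, Real.volume_Icc, ENNReal.toReal_inv,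
]
  rw [show (1 - 2⁻¹ : ℝ) = 1/2 by norm_num,
    max_eq_left (by norm_num : (0:ℝ) ≤ 1/2)]
  ring

/-- With X uniform on [0,1] in both groups, f̂ and f̃ are perfectly
group-fair (equal score distributions across s = 0, 1), yet on A = [1/2, 1] the
classifier f̂ has conditional means 1 and 0 for the two groups (maximal subset
unfairness), while f̃ has conditional mean 1 for both groups. -/
theorem group_fair_but_subset_unfair_example :
    let μ : Measure ℝ := volume.restrict (Set.Icc (0 : ℝ) 1)
    let A : Set ℝ := Set.Icc (1 / 2 : ℝ) 1
    (μ.map (fun x => fhat x 0) = μ.map (fun x => fhat x 1))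
      ∧ (μ.map (fun x => ftilde x 0) = μ.map (fun x => ftilde x 1))
      ∧ (∫ x, fhat x 0 ∂(μ[|A]) = 1) ∧ (∫ x, fhat x 1 ∂(μ[|A]) = 0)
      ∧ (∫ x, ftilde x 0 ∂(μ[|A]) = 1) ∧ (∫ x, ftilde x 1 ∂(μ[|A]) = 1) := by
  intro μ A
  have hdisj : Disjoint (Set.Ioi (1/2 : ℝ)) (Set.Iic (1/2 : ℝ)) := by
    rw [Set.disjoint_iff]
    rintro x ⟨h1, h2⟩
    exact absurd (Set.mem_Iic.mp h2) (not_le.mpr (Set.mem_Ioi.mp h1))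
  -- map equality
  have hmap : μ.map (fun x => fhat x 0) = μ.map (fun x => fhat x 1) := by
    ext s hs
    rw [Measure.map_apply meas_f0 hs, Measure.map_apply meas_f1 hs, pre0, pre1]
    by_cases h1 : (1:ℝ) ∈ s <;> by_cases h0 : (0:ℝ) ∈ s
    · rw [if_pos h1, if_pos h0, if_pos h0, if_pos h1]
    · rw [if_pos h1, if_neg h0, if_neg h0, if_pos h1, Set.union_empty, Set.empty_union]
      show (volume.restrict (Set.Icc (0:ℝ) 1)) _ = (volume.restrict (Set.Icc (0:ℝ) 1)) _
      rw [mu_Ioi, mu_Iic]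
    · rw [if_neg h1, if_pos h0, if_pos h0, if_neg h1, Set.union_empty, Set.empty_union]
      show (volume.restrict (Set.Icc (0:ℝ) 1)) _ = (volume.restrict (Set.Icc (0:ℝ) 1)) _
      rw [mu_Ioi, mu_Iic]
    · rw [if_neg h1, if_neg h0, if_neg h0, if_neg h1]
  have hmap2 : μ.map (fun x => ftilde x 0) = μ.map (fun x => ftilde x 1) := rfl
  refine ⟨hmap, hmap2, ?_, ?_, ?_, ?_⟩
  · exact int_cond _ 1 (ae_on _ 1 (fun x hx _ => by rw [fhat0_eq, if_pos hx]))
  · exact int_cond _ 0 (ae_on _ 0 (fun x hx _ => by rw [fhat1_eq, if_pos hx]))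
  · exact int_cond _ 1 (ae_on _ 1 (fun x hx _ => by rw [ftilde_eq, if_pos hx]))
  · exact int_cond _ 1 (ae_on _ 1 (fun x hx _ => by rw [ftilde_eq, if_pos hx]))
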